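/- Let φ, ω1, ω2, ω3 be real numbers and set k = exp(φ e1) and w = ω1 e1 + ω2 e2 + ω3 e3. Then e3 · (k·w·k*) · e3 = k·w·k* holds if and only if k⁴ · (ω2 + ω3 e1) = ω2 − ω3 e1. -/

import Mathlib

set_option maxHeartbeats 4000000



open Quaternion Set

/-- The imaginary quaternion unit `i`. -/
noncomputable def e1 : ℍ[ℝ] := ⟨0, 1, 0, 0⟩
/-- The imaginary quaternion unit `j`. -/
noncomputable def e2 : ℍ[ℝ] := ⟨0, 0, 1, 0⟩
/-- The imaginary quaternion unit `k`. -/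
noncomputable def e3 : ℍ[ℝ] := ⟨0, 0, 0, 1⟩

/-- `qexp φ = exp (φ e1) = cos φ + (sin φ) e1`. -/
noncomputable def qexp (φ : ℝ) : ℍ[ℝ] :=
  (Real.cos φ : ℍ[ℝ]) + (Real.sin φ : ℍ[ℝ]) * e1


theorem stmt_3 (φ ω1 ω2 ω3 : ℝ)
    (k : ℍ[ℝ]) (hk : k = qexp φ)
    (w : ℍ[ℝ])
    (hw : w = ((ω1 : ℝ) : ℍ[ℝ]) * e1 + ((ω2 : ℝ) : ℍ[ℝ]) * e2 + ((ω3 : ℝ) : ℍ[ℝ]) * e3) :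
    e3 * (k * w * star k) * e3 = k * w * star k ↔
      k ^ 4 * (((ω2 : ℝ) : ℍ[ℝ]) + ((ω3 : ℝ) : ℍ[ℝ]) * e1) =
        ((ω2 : ℝ) : ℍ[ℝ]) - ((ω3 : ℝ) : ℍ[ℝ]) * e1 := by

  subst hk hw
  simp only [qexp, Quaternion.ext_iff, Quaternion.re_mul, Quaternion.imI_mul,
    Quaternion.imJ_mul, Quaternion.imK_mul, Quaternion.re_add, Quaternion.imI_add,
    Quaternion.imJ_add, Quaternion.imK_add, Quaternion.re_sub, Quaternion.imI_sub,
    Quaternion.imJ_sub, Quaternion.imK_sub, Quaternion.re_star, Quaternion.imI_star,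
    Quaternion.imJ_star, Quaternion.imK_star, Quaternion.re_coe, Quaternion.imI_coe,
    Quaternion.imJ_coe, Quaternion.imK_coe, pow_succ, pow_zero, one_mul]
  simp only [e1, e2, e3]
  set c := Real.cos φ
  set s := Real.sin φ
  have h : c^2 + s^2 = 1 := by
    rw [add_comm]; exact Real.sin_sq_add_cos_sq φ
  ring_nf
  constructor
  · rintro ⟨-, -, -, h1⟩
    refine ⟨?_, ?_, trivial, trivial⟩
    · linear_combination (c^2+s^2+1)*ω2*h + 2*c*s*h1
    · linear_combination -(c^2-s^2)*h1 - (c^2+s^2+1)*ω3*h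
  · rintro ⟨h1, h2, -, -⟩
    refine ⟨trivial, trivial, trivial, ?_⟩
    linear_combination 2*c*s*h1 - (c^2-s^2)*h2 + (c^2+s^2+1)*(2*c*s*ω2+(c^2-s^2)*ω3)*h
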